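/- Let G be a graph with partial coloring p and H a set of vertices all happy with respect to a full coloring c extending p. Then every path u₁, …, u_t in G whose every edge is incident to at least one vertex of H induces a path in the square of G restricted to H: the subsequence of vertices of the path lying in H forms a walk in G²[H], where consecutive members of the subsequence are adjacent in G²[H]. -/
import Mathlib


/-- A path whose every edge is incident to H induces a walk in the square of G
restricted to H: consecutive members of the H-subsequence are adjacent in G²[H]. -/
theorem stmt_4 {V : Type*} (G : SimpleGraph V) (p : V → Option ℕ) (c : V → ℕ) (H : Set V)
    (hext : ∀ v a, p v = some a → c v = a)
    (hH : ∀ v ∈ H, ∀ w, G.Adj v w → c w = c v)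
    (t : ℕ) (u : Fin (t + 1) → V) (hinj : Function.Injective u)
    (hadj : ∀ i : Fin t, G.Adj (u i.castSucc) (u i.succ))
    (hedge : ∀ i : Fin t, u i.castSucc ∈ H ∨ u i.succ ∈ H)
    (i j : Fin (t + 1)) (hij : i < j) (hiH : u i ∈ H) (hjH : u j ∈ H)
    (hbetween : ∀ k : Fin (t + 1), i < k → k < j → u k ∉ H) :
    u i ≠ u j ∧ (G.Adj (u i) (u j) ∨ ∃ w, G.Adj (u i) w ∧ G.Adj w (u j)) := by
  refine ⟨fun h => absurd (hinj h) (Fin.ne_of_lt hij), ?_⟩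
  have hjt : (j : ℕ) ≤ t := Nat.lt_succ_iff.mp j.isLt
  have hit : (i : ℕ) < t := lt_of_lt_of_le hij hjt
  have h1 := hadj ⟨i, hit⟩
  have hcs : (⟨(i : ℕ), hit⟩ : Fin t).castSucc = i := by ext; simp
  rw [hcs] at h1
  by_cases hj1 : (j : ℕ) = i + 1
  · left
    have : (⟨(i : ℕ), hit⟩ : Fin t).succ = j := by ext; simp [hj1]
    rwa [this] at h1
  · right
    have hi1j : (i : ℕ) + 1 < j := lt_of_le_of_ne hij (fun h => hj1 h.symm)
    have hi1t : (i : ℕ) + 1 < t := lt_of_lt_of_le hi1j hjt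
    have h2 := hadj ⟨(i : ℕ) + 1, hi1t⟩
    have hnH : u ⟨(i : ℕ) + 1, by omega⟩ ∉ H := by
      apply hbetween
      · exact Nat.lt_succ_self _
      · exact hi1j
    have hcs2 : (⟨(i : ℕ) + 1, hi1t⟩ : Fin t).castSucc = (⟨(i : ℕ) + 1, by omega⟩ : Fin (t+1)) := by
      ext; simp
    have hsucc : (⟨(i : ℕ), hit⟩ : Fin t).succ = (⟨(i : ℕ) + 1, by omega⟩ : Fin (t+1)) := by
      ext; simp
    rw [hsucc] at h1
    rw [hcs2] at h2
    have h2H : u (⟨(i : ℕ) + 1, hi1t⟩ : Fin t).succ ∈ H := by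
      rcases hedge ⟨(i : ℕ) + 1, hi1t⟩ with h | h
      · rw [hcs2] at h; exact absurd h hnH
      · exact h
    have hj2 : (j : ℕ) = i + 2 := by
      by_contra hne
      have : ((⟨(i : ℕ) + 1, hi1t⟩ : Fin t).succ : ℕ) = i + 2 := by simp
      exact hbetween (⟨(i : ℕ) + 1, hi1t⟩ : Fin t).succ
        (by rw [Fin.lt_iff_val_lt_val, this]; omega)
        (by rw [Fin.lt_iff_val_lt_val, this]; omega) h2H
    have : (⟨(i : ℕ) + 1, hi1t⟩ : Fin t).succ = j := by ext; simp [hj2]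
    rw [this] at h2
    exact ⟨_, h1, h2⟩
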